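/- For every 𝔷-module N on which z acts invertibly, the 𝔥-module G(N) = U(𝔥) ⊗_{U(𝔭)} E(N) lies in 𝓜_𝔩(𝔥)^×: every element of 𝔩 acts locally nilpotently on G(N) (i.e. for every X ∈ 𝔩 and every w ∈ G(N) there exists i with X^i·w = 0), and z acts invertibly on G(N). -/

import Mathlib

open scoped TensorProduct

structure AltBilin (k V : Type*) [Field k] [AddCommGroup V] [Module k V] where
  form : V →ₗ[k] V →ₗ[k] k
  alt : ∀ v : V, form v v = 0

variable {k V : Type*} [Field k] [AddCommGroup V] [Module k V]

def Heisenberg (ω : AltBilin k V) : Type _ := V × k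

namespace Heisenberg
variable (ω : AltBilin k V)
instance : AddCommGroup (Heisenberg ω) := inferInstanceAs (AddCommGroup (V × k))
instance : Module k (Heisenberg ω) := inferInstanceAs (Module k (V × k))
instance : LieRing (Heisenberg ω) where
  bracket x y := (((0 : V), ω.form x.1 y.1) : V × k)
  add_lie x y z := by
    show (((0 : V), ω.form (x.1 + y.1) z.1) : V × k)
      = ((0 : V), ω.form x.1 z.1) + ((0 : V), ω.form y.1 z.1)
    ext <;> simp
  lie_add x y z := by
    show (((0 : V), ω.form x.1 (y.1 + z.1)) : V × k)
      = ((0 : V), ω.form x.1 y.1) + ((0 : V), ω.form x.1 z.1)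
    ext <;> simp
  lie_self x := by
    show (((0 : V), ω.form x.1 x.1) : V × k) = 0
    ext <;> simp [ω.alt]
  leibniz_lie x y z := by
    show (((0 : V), ω.form x.1 ((0 : V), ω.form y.1 z.1).1) : V × k)
      = (((0 : V), ω.form ((0 : V), ω.form x.1 y.1).1 z.1) : V × k)
        + (((0 : V), ω.form y.1 ((0 : V), ω.form x.1 z.1).1) : V × k)
    ext <;> simp
instance : LieAlgebra k (Heisenberg ω) where
  lie_smul t x y := by
    show (((0 : V), ω.form x.1 (t • y).1) : V × k)
      = t • (((0 : V), ω.form x.1 y.1) : V × k)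
    have h1 : (t • y).1 = t • y.1 := rfl
    ext <;> simp [h1]
def zH : Heisenberg ω := (((0 : V), (1 : k)) : V × k)
def ofV (v : V) : Heisenberg ω := ((v, (0 : k)) : V × k)
def ofVk (v : V) (c : k) : Heisenberg ω := ((v, c) : V × k)
end Heisenberg


section Defs

variable (ω : AltBilin k V)
variable (N : Type*) [AddCommGroup N] [Module k N]

/-- The submodule of relations presenting `G(N) = U(𝔥) ⊗_{U(𝔭)} E(N)` as a
quotient of `U(𝔥) ⊗_k N`: it is spanned by the elements
`(u·ι(x,c)) ⊗ n − u ⊗ (c • ζ n)` for `x ∈ 𝔩`, `c ∈ k`, `n ∈ N`, where `ζ` is the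
action of the central element `z` on the `𝔷`-module `N` and `𝔩` acts on `E(N)`
by zero. -/
noncomputable def relN (l : Submodule k V) (ζ : Module.End k N) :
    Submodule k (UniversalEnvelopingAlgebra k (Heisenberg ω) ⊗[k] N) :=
  Submodule.span k
    {t | ∃ (u : UniversalEnvelopingAlgebra k (Heisenberg ω)) (x : V),
        x ∈ l ∧ ∃ (c : k) (n : N),
          t = (u * UniversalEnvelopingAlgebra.ι k (Heisenberg.ofVk ω x c)) ⊗ₜ[k] n
              - u ⊗ₜ[k] (c • ζ n)}

/-- Left multiplication by `ι(h)` on the first factor of `U(𝔥) ⊗_k N`; this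
induces the `𝔥`-module structure on `G(N)`. -/
noncomputable def lmul (h : Heisenberg ω) :
    (UniversalEnvelopingAlgebra k (Heisenberg ω) ⊗[k] N) →ₗ[k]
      (UniversalEnvelopingAlgebra k (Heisenberg ω) ⊗[k] N) :=
  TensorProduct.map (LinearMap.mulLeft k (UniversalEnvelopingAlgebra.ι k h)) LinearMap.id

end Defs


section Aux

theorem uea_induction {R L : Type*} [CommRing R] [LieRing L] [LieAlgebra R L]
    {C : UniversalEnvelopingAlgebra R L → Prop}
    (halg : ∀ r, C (algebraMap R (UniversalEnvelopingAlgebra R L) r))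
    (hι : ∀ x, C (UniversalEnvelopingAlgebra.ι R x))
    (hmul : ∀ a b, C a → C b → C (a * b)) (hadd : ∀ a b, C a → C b → C (a + b))
    (a : UniversalEnvelopingAlgebra R L) : C a := by
  have hsurj : Function.Surjective (UniversalEnvelopingAlgebra.mkAlgHom R L) := by
    unfold UniversalEnvelopingAlgebra.mkAlgHom; exact RingCon.mkₐ_surjective _
  obtain ⟨a, rfl⟩ := hsurj a
  induction a using TensorAlgebra.induction with
  | algebraMap r => rw [AlgHom.commutes]; exact halg r
  | ι x => exact hι x
  | mul a b ha hb => rw [map_mul]; exact hmul _ _ ha hb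
  | add a b ha hb => rw [map_add]; exact hadd _ _ ha hb

variable {k V : Type*} [Field k] [AddCommGroup V] [Module k V]

attribute [local instance 100] LieRing.ofAssociativeRing

lemma heis_bracket (ω : AltBilin k V) (a b : Heisenberg ω) :
    ⁅a, b⁆ = (((0 : V), ω.form a.1 b.1) : V × k) := rfl

lemma zH_fst (ω : AltBilin k V) : (Heisenberg.zH ω).1 = 0 := rfl

lemma zH_bracket (ω : AltBilin k V) (h : Heisenberg ω) : ⁅Heisenberg.zH ω, h⁆ = 0 := by
  rw [heis_bracket, zH_fst, map_zero]
  rfl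

lemma ofV_bracket (ω : AltBilin k V) (x : V) (h : Heisenberg ω) :
    ⁅Heisenberg.ofV ω x, h⁆ = ω.form x h.1 • Heisenberg.zH ω := by
  rw [heis_bracket]
  show (((0 : V), ω.form x h.1) : V × k) = ω.form x h.1 • (((0 : V), (1 : k)) : V × k)
  rw [Prod.smul_mk, smul_zero, smul_eq_mul, mul_one]

lemma z_central (ω : AltBilin k V) (u : UniversalEnvelopingAlgebra k (Heisenberg ω)) :
    UniversalEnvelopingAlgebra.ι k (Heisenberg.zH ω) * u
      = u * UniversalEnvelopingAlgebra.ι k (Heisenberg.zH ω) := by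
  induction u using uea_induction with
  | halg r => exact (Algebra.commutes r _).symm
  | hι x =>
      have h1 := (UniversalEnvelopingAlgebra.ι k (L := Heisenberg ω)).map_lie
        (Heisenberg.zH ω) x
      rw [zH_bracket, map_zero, Ring.lie_def] at h1
      exact (sub_eq_zero.mp h1.symm)
  | hmul a b ha hb => rw [← mul_assoc, ha, mul_assoc, hb, mul_assoc]
  | hadd a b ha hb => rw [mul_add, add_mul, ha, hb]

/-- `ad (ι (ofV x))` on the universal enveloping algebra. -/
noncomputable def Dx (ω : AltBilin k V) (x : V) :
    Module.End k (UniversalEnvelopingAlgebra k (Heisenberg ω)) :=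
  LinearMap.mulLeft k (UniversalEnvelopingAlgebra.ι k (Heisenberg.ofV ω x))
    - LinearMap.mulRight k (UniversalEnvelopingAlgebra.ι k (Heisenberg.ofV ω x))

lemma Dx_apply (ω : AltBilin k V) (x : V) (u : UniversalEnvelopingAlgebra k (Heisenberg ω)) :
    Dx ω x u = UniversalEnvelopingAlgebra.ι k (Heisenberg.ofV ω x) * u
      - u * UniversalEnvelopingAlgebra.ι k (Heisenberg.ofV ω x) := rfl

lemma Dx_ι (ω : AltBilin k V) (x : V) (h : Heisenberg ω) :
    Dx ω x (UniversalEnvelopingAlgebra.ι k h)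
      = ω.form x h.1 • UniversalEnvelopingAlgebra.ι k (Heisenberg.zH ω) := by
  rw [Dx_apply]
  have h1 := (UniversalEnvelopingAlgebra.ι k (L := Heisenberg ω)).map_lie
    (Heisenberg.ofV ω x) h
  rw [ofV_bracket, Ring.lie_def, map_smul] at h1
  exact h1.symm

lemma Dx_sq_ι (ω : AltBilin k V) (x : V) (h : Heisenberg ω) :
    Dx ω x (Dx ω x (UniversalEnvelopingAlgebra.ι k h)) = 0 := by
  rw [Dx_ι, map_smul, Dx_ι, zH_fst, map_zero, zero_smul, smul_zero]

lemma Dx_mul (ω : AltBilin k V) (x : V)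
    (a b : UniversalEnvelopingAlgebra k (Heisenberg ω)) :
    Dx ω x (a * b) = Dx ω x a * b + a * Dx ω x b := by
  simp only [Dx_apply]
  noncomm_ring

lemma end_pow_zero_of_le {M : Type*} [AddCommGroup M] [Module k M]
    {f : Module.End k M} {a : M} {i : ℕ} (h : (f ^ i) a = 0) {m : ℕ} (him : i ≤ m) :
    (f ^ m) a = 0 := by
  obtain ⟨c, rfl⟩ := Nat.exists_eq_add_of_le him
  rw [add_comm, pow_add, Module.End.mul_apply, h, map_zero]

lemma Dx_pow_mul (ω : AltBilin k V) (x : V) :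
    ∀ (n i j : ℕ) (a b : UniversalEnvelopingAlgebra k (Heisenberg ω)),
      i + j ≤ n + 1 → ((Dx ω x) ^ i) a = 0 → ((Dx ω x) ^ j) b = 0 →
      ((Dx ω x) ^ n) (a * b) = 0 := by
  intro n
  induction n with
  | zero =>
      intro i j a b hij ha hb
      rcases Nat.le_one_iff_eq_zero_or_eq_one.mp hij with h | h
      · obtain ⟨hi, hj⟩ := Nat.add_eq_zero.mp h
        subst hi; rw [pow_zero, Module.End.one_apply] at ha
        rw [pow_zero, Module.End.one_apply, ha, zero_mul]
      · rcases i with _ | i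
        · rw [pow_zero, Module.End.one_apply] at ha
          rw [pow_zero, Module.End.one_apply, ha, zero_mul]
        · have hj : j = 0 := by omega
          subst hj
          rw [pow_zero, Module.End.one_apply] at hb
          rw [pow_zero, Module.End.one_apply, hb, mul_zero]
  | succ n IH =>
      intro i j a b hij ha hb
      rcases i with _ | i
      · rw [pow_zero, Module.End.one_apply] at ha
        rw [ha, zero_mul, map_zero]
      rcases j with _ | j
      · rw [pow_zero, Module.End.one_apply] at hb
        rw [hb, mul_zero, map_zero]
      rw [pow_succ, Module.End.mul_apply, Dx_mul, map_add]
      have ha' : ((Dx ω x) ^ i) (Dx ω x a) = 0 := by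
        rw [← Module.End.mul_apply, ← pow_succ]; exact ha
      have hb' : ((Dx ω x) ^ j) (Dx ω x b) = 0 := by
        rw [← Module.End.mul_apply, ← pow_succ]; exact hb
      rw [IH i (j + 1) _ _ (by omega) ha' hb,
        IH (i + 1) j _ _ (by omega) ha hb', add_zero]

lemma Dx_loc_nilp (ω : AltBilin k V) (x : V)
    (u : UniversalEnvelopingAlgebra k (Heisenberg ω)) :
    ∃ i : ℕ, ((Dx ω x) ^ i) u = 0 := by
  induction u using uea_induction with
  | halg r =>
      refine ⟨1, ?_⟩
      rw [pow_one, Dx_apply, Algebra.commutes, sub_self]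
  | hι h =>
      refine ⟨2, ?_⟩
      rw [pow_succ, pow_one, Module.End.mul_apply]
      exact Dx_sq_ι ω x h
  | hmul a b ha hb =>
      obtain ⟨i, ha⟩ := ha
      obtain ⟨j, hb⟩ := hb
      exact ⟨i + j, Dx_pow_mul ω x (i + j) i j a b (by omega) ha hb⟩
  | hadd a b ha hb =>
      obtain ⟨i, ha⟩ := ha
      obtain ⟨j, hb⟩ := hb
      refine ⟨max i j, ?_⟩
      rw [map_add, end_pow_zero_of_le ha (le_max_left i j),
        end_pow_zero_of_le hb (le_max_right i j), add_zero]

end Aux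

/-- for every `𝔷`-module `N` on which `z` acts invertibly (with
action `ζ`), the `𝔥`-module `G(N) = U(𝔥) ⊗_{U(𝔭)} E(N)` lies in `𝓜_𝔩(𝔥)^×`.
Here `G(N)` is presented as the quotient of `U(𝔥) ⊗_k N` by the relation
submodule `relN`, on which `h ∈ 𝔥` acts via left multiplication `lmul`.
The claims are: the relation submodule is stable under the `𝔥`-action (so the
action descends to the quotient); every element of `𝔩` acts locally nilpotently
on the quotient; and the central element `z` acts injectively and surjectively
(hence invertibly) on the quotient. -/
theorem stmt7 {k V : Type*} [Field k] [CharZero k] [AddCommGroup V] [Module k V]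
    [FiniteDimensional k V] (ω : AltBilin k V)
    (hnondeg : ∀ v : V, (∀ w : V, ω.form v w = 0) → v = 0)
    (l : Submodule k V) (hLag : ∀ v : V, v ∈ l ↔ ∀ x ∈ l, ω.form v x = 0)
    (N : Type*) [AddCommGroup N] [Module k N]
    (ζ : Module.End k N) (hζ : Function.Bijective ζ) :
    (∀ (h : Heisenberg ω), ∀ t ∈ relN ω N l ζ, lmul ω N h t ∈ relN ω N l ζ)
    ∧ (∀ x ∈ l, ∀ t : UniversalEnvelopingAlgebra k (Heisenberg ω) ⊗[k] N,
        ∃ i : ℕ, ((lmul ω N (Heisenberg.ofV ω x)) ^ i) t ∈ relN ω N l ζ)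
    ∧ (∀ t : UniversalEnvelopingAlgebra k (Heisenberg ω) ⊗[k] N,
        lmul ω N (Heisenberg.zH ω) t ∈ relN ω N l ζ → t ∈ relN ω N l ζ)
    ∧ (∀ t : UniversalEnvelopingAlgebra k (Heisenberg ω) ⊗[k] N,
        ∃ t' : UniversalEnvelopingAlgebra k (Heisenberg ω) ⊗[k] N,
          t - lmul ω N (Heisenberg.zH ω) t' ∈ relN ω N l ζ) := by
  classical
  set K := UniversalEnvelopingAlgebra k (Heisenberg ω) with hK
  -- basic membership helper
  have mem_gen : ∀ (u : UniversalEnvelopingAlgebra k (Heisenberg ω)) (x : V), x ∈ l →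
      ∀ (c : k) (n : N),
      (u * UniversalEnvelopingAlgebra.ι k (Heisenberg.ofVk ω x c)) ⊗ₜ[k] n
        - u ⊗ₜ[k] (c • ζ n) ∈ relN ω N l ζ := by
    intro u x hx c n
    exact Submodule.subset_span ⟨u, x, hx, c, n, rfl⟩
  -- c = 0 case
  have mem_c0 : ∀ (u : UniversalEnvelopingAlgebra k (Heisenberg ω)) (x : V), x ∈ l →
      ∀ n : N, (u * UniversalEnvelopingAlgebra.ι k (Heisenberg.ofV ω x)) ⊗ₜ[k] n
        ∈ relN ω N l ζ := by
    intro u x hx n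
    have h := mem_gen u x hx 0 n
    rw [zero_smul, TensorProduct.tmul_zero, sub_zero] at h
    exact h
  -- z case
  have mem_z : ∀ (u : UniversalEnvelopingAlgebra k (Heisenberg ω)) (n : N),
      (u * UniversalEnvelopingAlgebra.ι k (Heisenberg.zH ω)) ⊗ₜ[k] n
        - u ⊗ₜ[k] (ζ n) ∈ relN ω N l ζ := by
    intro u n
    have h := mem_gen u 0 l.zero_mem 1 n
    rw [one_smul] at h
    exact h
  -- Part 1: stability
  have stab : ∀ (h : Heisenberg ω), ∀ t ∈ relN ω N l ζ, lmul ω N h t ∈ relN ω N l ζ := by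
    intro h t ht
    have hle : relN ω N l ζ ≤ Submodule.comap (lmul ω N h) (relN ω N l ζ) := by
      apply Submodule.span_le.mpr
      rintro t ⟨u, x, hx, c, n, rfl⟩
      simp only [SetLike.mem_coe, Submodule.mem_comap, map_sub, lmul,
        TensorProduct.map_tmul, LinearMap.mulLeft_apply, LinearMap.id_coe, id_eq]
      rw [← mul_assoc]
      exact mem_gen (UniversalEnvelopingAlgebra.ι k h * u) x hx c n
    exact hle ht
  have stab_iter : ∀ (h : Heisenberg ω) (c : ℕ)
      (t : UniversalEnvelopingAlgebra k (Heisenberg ω) ⊗[k] N), t ∈ relN ω N l ζ →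
      ((lmul ω N h) ^ c) t ∈ relN ω N l ζ := by
    intro h c
    induction c with
    | zero => intro t ht; rwa [pow_zero, Module.End.one_apply]
    | succ c IH =>
        intro t ht
        rw [pow_succ', Module.End.mul_apply]
        exact stab h _ (IH t ht)
  have stab_mono : ∀ (h : Heisenberg ω) {i m : ℕ}, i ≤ m →
      ∀ (t : UniversalEnvelopingAlgebra k (Heisenberg ω) ⊗[k] N),
      ((lmul ω N h) ^ i) t ∈ relN ω N l ζ → ((lmul ω N h) ^ m) t ∈ relN ω N l ζ := by
    intro h i m him t ht
    obtain ⟨c, rfl⟩ := Nat.exists_eq_add_of_le him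
    rw [add_comm, pow_add, Module.End.mul_apply]
    exact stab_iter h c _ ht
  -- Part 2: local nilpotency
  have locnil : ∀ x ∈ l, ∀ t : UniversalEnvelopingAlgebra k (Heisenberg ω) ⊗[k] N,
      ∃ i : ℕ, ((lmul ω N (Heisenberg.ofV ω x)) ^ i) t ∈ relN ω N l ζ := by
    intro x hx t
    have key : ∀ (i : ℕ) (u : UniversalEnvelopingAlgebra k (Heisenberg ω)) (n : N),
        ((lmul ω N (Heisenberg.ofV ω x)) ^ i) (u ⊗ₜ[k] n)
          - (((Dx ω x) ^ i) u) ⊗ₜ[k] n ∈ relN ω N l ζ := by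
      intro i
      induction i with
      | zero =>
          intro u n
          simp only [pow_zero, Module.End.one_apply, sub_self]
          exact Submodule.zero_mem _
      | succ i IH =>
          intro u n
          have heq : ((lmul ω N (Heisenberg.ofV ω x)) ^ (i + 1)) (u ⊗ₜ[k] n)
              - (((Dx ω x) ^ (i + 1)) u) ⊗ₜ[k] n
            = lmul ω N (Heisenberg.ofV ω x)
                (((lmul ω N (Heisenberg.ofV ω x)) ^ i) (u ⊗ₜ[k] n)
                  - (((Dx ω x) ^ i) u) ⊗ₜ[k] n)
              + ((((Dx ω x) ^ i) u
                  * UniversalEnvelopingAlgebra.ι k (Heisenberg.ofV ω x)) ⊗ₜ[k] n) := by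
            rw [pow_succ', Module.End.mul_apply, pow_succ', Module.End.mul_apply, map_sub]
            rw [show lmul ω N (Heisenberg.ofV ω x) ((((Dx ω x) ^ i) u) ⊗ₜ[k] n)
                = (UniversalEnvelopingAlgebra.ι k (Heisenberg.ofV ω x)
                    * ((Dx ω x) ^ i) u) ⊗ₜ[k] n from rfl]
            rw [Dx_apply, TensorProduct.sub_tmul]
            abel
          rw [heq]
          exact Submodule.add_mem _ (stab _ _ (IH u n)) (mem_c0 _ x hx n)
    induction t using TensorProduct.induction_on with
    | zero => exact ⟨0, by simp only [map_zero]; exact Submodule.zero_mem _⟩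
    | tmul u n =>
        obtain ⟨i, hi⟩ := Dx_loc_nilp ω x u
        refine ⟨i, ?_⟩
        have h := key i u n
        rw [hi, TensorProduct.zero_tmul, sub_zero] at h
        exact h
    | add t1 t2 h1 h2 =>
        obtain ⟨i, h1⟩ := h1
        obtain ⟨j, h2⟩ := h2
        refine ⟨max i j, ?_⟩
        rw [map_add]
        exact Submodule.add_mem _ (stab_mono _ (le_max_left i j) _ h1)
          (stab_mono _ (le_max_right i j) _ h2)
  -- the inverse of ζ
  let e : N ≃ₗ[k] N := LinearEquiv.ofBijective ζ hζ
  let η : Module.End k N := (e.symm : N →ₗ[k] N)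
  have hζη : ∀ n : N, ζ (η n) = n := fun n => e.apply_symm_apply n
  have hηζ : ∀ n : N, η (ζ n) = n := fun n => e.symm_apply_apply n
  set F := TensorProduct.map (LinearMap.id
    (M := UniversalEnvelopingAlgebra k (Heisenberg ω))) ζ with hF
  set G := TensorProduct.map (LinearMap.id
    (M := UniversalEnvelopingAlgebra k (Heisenberg ω))) η with hG
  have hFG : ∀ t : UniversalEnvelopingAlgebra k (Heisenberg ω) ⊗[k] N, F (G t) = t := by
    intro t
    induction t using TensorProduct.induction_on with
    | zero => simp
    | tmul u n =>
        simp only [hF, hG, TensorProduct.map_tmul, LinearMap.id_coe, id_eq]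
        rw [hζη]
    | add t1 t2 h1 h2 => rw [map_add, map_add, h1, h2]
  have hGF : ∀ t : UniversalEnvelopingAlgebra k (Heisenberg ω) ⊗[k] N, G (F t) = t := by
    intro t
    induction t using TensorProduct.induction_on with
    | zero => simp
    | tmul u n =>
        simp only [hF, hG, TensorProduct.map_tmul, LinearMap.id_coe, id_eq]
        rw [hηζ]
    | add t1 t2 h1 h2 => rw [map_add, map_add, h1, h2]
  have hGrel : ∀ t ∈ relN ω N l ζ, G t ∈ relN ω N l ζ := by
    intro t ht
    have hle : relN ω N l ζ ≤ Submodule.comap G (relN ω N l ζ) := by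
      apply Submodule.span_le.mpr
      rintro t ⟨u, x, hx, c, n, rfl⟩
      simp only [SetLike.mem_coe, Submodule.mem_comap, map_sub, hG,
        TensorProduct.map_tmul, LinearMap.id_coe, id_eq]
      have h := mem_gen u x hx c (η n)
      rw [show η (c • ζ n) = c • ζ (η n) by rw [map_smul, hηζ, hζη]]
      exact h
    exact hle ht
  have hcomm : ∀ t : UniversalEnvelopingAlgebra k (Heisenberg ω) ⊗[k] N,
      lmul ω N (Heisenberg.zH ω) t - F t ∈ relN ω N l ζ := by
    intro t
    induction t using TensorProduct.induction_on with
    | zero => simp only [map_zero, sub_zero]; exact Submodule.zero_mem _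
    | tmul u n =>
        simp only [hF, lmul, TensorProduct.map_tmul, LinearMap.mulLeft_apply,
          LinearMap.id_coe, id_eq]
        rw [z_central]
        exact mem_z u n
    | add t1 t2 h1 h2 =>
        rw [map_add, map_add, add_sub_add_comm]
        exact Submodule.add_mem _ h1 h2
  refine ⟨stab, locnil, ?_, ?_⟩
  · intro t ht
    have h1 : F t ∈ relN ω N l ζ := by
      have := Submodule.sub_mem _ ht (hcomm t)
      rwa [sub_sub_cancel] at this
    have h2 := hGrel _ h1
    rwa [hGF] at h2
  · intro t
    refine ⟨G t, ?_⟩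
    have h := hcomm (G t)
    rw [hFG] at h
    have := Submodule.neg_mem _ h
    rwa [neg_sub] at this
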